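/- Let s and t be closed terms over Kleene's first model K_1. Then s ≈ t (i.e., s ∼_α t for some ordinal α) if and only if for every infinite sequence a_0, a_1, a_2, … of elements of K_1 there is an n such that s·a_0·a_1·…·a_n ≃ t·a_0·a_1·…·a_n. Equivalently, s ≈ t iff the tree T = {σ ∈ ω^{<ω} : s·σ ≄ t·σ} is well-founded. -/

import Mathlib

/-- A partial applicative structure: a set with a partial binary application. -/
structure PAS where
  carrier : Type
  app : carrier → carrier → Part carrier

namespace PAS

/-- Closed terms over a partial applicative structure. -/
inductive Term (A : PAS) : Type
  | const : A.carrier → Term A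
  | app : Term A → Term A → Term A

/-- Evaluation of a closed term (a partial element of the carrier). -/
def Term.eval {A : PAS} : Term A → Part A.carrier
  | .const a => Part.some a
  | .app s t => do
      let x ← Term.eval s
      let y ← Term.eval t
      A.app x y

/-- Kleene equality of closed terms: both undefined, or both defined and equal. -/
def KEq {A : PAS} (s t : Term A) : Prop := s.eval = t.eval

/-- The transfinite hierarchy of extensionality relations `∼_α` on closed terms:
`s ∼_0 t` iff `s ≃ t`; `s ∼_{α+1} t` iff `∀ x, s·x ∼_α t·x`; and at limits,
`s ∼_α t` iff `s ∼_β t` for some `β < α`. -/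
noncomputable def sim (A : PAS) (α : Ordinal) : Term A → Term A → Prop :=
  Ordinal.limitRecOn α
    (fun s t => KEq s t)
    (fun _ ih s t => ∀ x : A.carrier, ih (s.app (.const x)) (t.app (.const x)))
    (fun β _ ih s t => ∃ γ, ∃ h : γ < β, ih γ h s t)

end PAS

/-- A partial combinatory algebra: a partial applicative structure with
combinators `K` and `S` such that `K·a·b = a`, `S·a·b` is defined, and
`S·a·b·c ≃ a·c·(b·c)`. -/
structure PCA extends PAS where
  K : carrier
  S : carrier
  K_spec : ∀ a b : carrier, (app K a).bind (fun x => app x b) = Part.some a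
  S_defined : ∀ a b : carrier, ((app S a).bind (fun x => app x b)).Dom
  S_spec : ∀ a b c : carrier,
    ((app S a).bind (fun x => app x b)).bind (fun x => app x c)
      = (app a c).bind (fun u => (app b c).bind (fun v => app u v))

/-- Kleene's first model: the pca on ω with application n·m = Φ_n(m). -/
def K1 : PAS :=
  ⟨ℕ, fun n m => (Denumerable.ofNat Nat.Partrec.Code n).eval m⟩

/-- Iterated application of a term to a finite list of elements: t·σ(0)·…·σ(k-1). -/
def PAS.Term.appList {A : PAS} (t : PAS.Term A) (σ : List A.carrier) : PAS.Term A :=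
  σ.foldl (fun s x => s.app (.const x)) t

/-- An element is hereditarily total if every iterated application to elements is defined. -/
def PAS.HeredTotal (A : PAS) (a : A.carrier) : Prop :=
  ∀ σ : List A.carrier, ((PAS.Term.const a).appList σ).eval.Dom

/-- A set of strings (tree) is well-founded iff the proper-extension relation on it
is well-founded, i.e. it has no infinite path. -/
def TreeWellFounded (T : List ℕ → Prop) : Prop :=
  WellFounded (fun τ σ : {l : List ℕ // T l} => σ.1 <+: τ.1 ∧ σ.1 ≠ τ.1)

section Lemmas

open PAS

lemma keq_app {A : PAS} {s t : A.Term} (h : PAS.KEq s t) (x : A.carrier) :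
    PAS.KEq (s.app (.const x)) (t.app (.const x)) := by
  unfold PAS.KEq at *
  simp [PAS.Term.eval, h]

lemma keq_appList {A : PAS} {s t : A.Term} (h : PAS.KEq s t) (l : List A.carrier) :
    PAS.KEq (s.appList l) (t.appList l) := by
  induction l generalizing s t with
  | nil => exact h
  | cons x l ih => exact ih (keq_app h x)

lemma appList_append {A : PAS} (t : A.Term) (l₁ l₂ : List A.carrier) :
    t.appList (l₁ ++ l₂) = (t.appList l₁).appList l₂ :=
  List.foldl_append ..

lemma appList_concat {A : PAS} (t : A.Term) (l : List A.carrier) (x : A.carrier) :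
    t.appList (l ++ [x]) = (t.appList l).app (.const x) :=
  appList_append ..

lemma sim_zero {A : PAS} {s t : A.Term} : A.sim 0 s t ↔ PAS.KEq s t := by
  unfold PAS.sim
  rw [Ordinal.limitRecOn_zero]

lemma sim_succ {A : PAS} {α : Ordinal} {s t : A.Term} :
    A.sim (Order.succ α) s t ↔
      ∀ x : A.carrier, A.sim α (s.app (.const x)) (t.app (.const x)) := by
  unfold PAS.sim
  rw [Ordinal.limitRecOn_succ]

lemma sim_limit {A : PAS} {α : Ordinal} (h : Order.IsSuccLimit α) {s t : A.Term} :
    A.sim α s t ↔ ∃ γ, ∃ _ : γ < α, A.sim γ s t := by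
  unfold PAS.sim
  rw [Ordinal.limitRecOn_limit _ _ _ _ h]

lemma sim_app {A : PAS} {α : Ordinal} {s t : A.Term} (h : A.sim α s t) :
    ∀ x : A.carrier, A.sim α (s.app (.const x)) (t.app (.const x)) := by
  induction α using Ordinal.limitRecOn generalizing s t with
  | zero => exact fun x => sim_zero.mpr (keq_app (sim_zero.mp h) x)
  | add_one α ih =>
    rw [Ordinal.add_one_eq_succ] at *
    rw [sim_succ] at h
    intro x
    rw [sim_succ]
    exact fun y => ih (h x) y
  | limit α hα ih =>
    rw [sim_limit hα] at h
    obtain ⟨γ, hγ, hsim⟩ := h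
    intro x
    rw [sim_limit hα]
    exact ⟨γ, hγ, ih γ hγ hsim x⟩

lemma sim_mono {A : PAS} {α β : Ordinal} (hle : α ≤ β) {s t : A.Term}
    (h : A.sim α s t) : A.sim β s t := by
  induction β using Ordinal.limitRecOn with
  | zero => rwa [nonpos_iff_eq_zero.mp hle] at h
  | add_one β ih =>
    rw [Ordinal.add_one_eq_succ] at *
    rcases lt_or_eq_of_le hle with hlt | rfl
    · exact sim_succ.mpr (fun x => sim_app (ih (Order.lt_succ_iff.mp hlt)) x)
    · exact h
  | limit β hβ ih =>
    rcases lt_or_eq_of_le hle with hlt | rfl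
    · exact (sim_limit hβ).mpr ⟨α, hlt, h⟩
    · exact h

lemma sim_path {α : Ordinal} {s t : K1.Term} (h : K1.sim α s t) :
    ∀ a : ℕ → ℕ, ∃ n : ℕ,
      PAS.KEq (s.appList (List.ofFn fun i : Fin (n + 1) => a i))
              (t.appList (List.ofFn fun i : Fin (n + 1) => a i)) := by
  induction α using Ordinal.limitRecOn generalizing s t with
  | zero => exact fun a => ⟨0, keq_appList (sim_zero.mp h) _⟩
  | add_one α ih =>
    intro a
    rw [Ordinal.add_one_eq_succ] at h
    rw [sim_succ] at h
    obtain ⟨n, hn⟩ := ih (h (a 0)) (fun i => a (i + 1))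
    refine ⟨n + 1, ?_⟩
    have : (List.ofFn fun i : Fin (n + 2) => a i)
        = a 0 :: List.ofFn fun i : Fin (n + 1) => a (i + 1) := by
      rw [List.ofFn_succ]
      simp [Fin.val_succ]
    exact (congrArg (fun l : List ℕ => PAS.KEq (s.appList l) (t.appList l)) this).mpr hn
  | limit α hα ih =>
    rw [sim_limit hα] at h
    obtain ⟨γ, hγ, hsim⟩ := h
    exact ih γ hγ hsim

end Lemmas

lemma path_to_wf (s t : K1.Term)
    (h : ∀ a : ℕ → ℕ, ∃ n : ℕ,
        PAS.KEq (s.appList (List.ofFn fun i : Fin (n + 1) => a i))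
                (t.appList (List.ofFn fun i : Fin (n + 1) => a i))) :
    TreeWellFounded (fun σ => ¬ PAS.KEq (s.appList σ) (t.appList σ)) := by
  unfold TreeWellFounded
  set r : {l : List ℕ // ¬ PAS.KEq (s.appList l) (t.appList l)} →
      {l : List ℕ // ¬ PAS.KEq (s.appList l) (t.appList l)} → Prop :=
    fun τ σ => σ.1 <+: τ.1 ∧ σ.1 ≠ τ.1 with hr
  have hlen' : ∀ {p q}, r p q → q.1.length < p.1.length := by
    rintro p q ⟨hp, hne⟩
    exact lt_of_le_of_ne hp.length_le (fun he => hne (hp.eq_of_length he))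
  haveI : IsIrrefl _ r := ⟨fun p hp => hp.2 rfl⟩
  haveI : IsTrans _ r := ⟨fun p q u hpq hqu =>
    ⟨hqu.1.trans hpq.1, fun he => absurd (congrArg List.length he)
      (Nat.ne_of_lt ((hlen' hqu).trans (hlen' hpq)))⟩⟩
  haveI : IsStrictOrder _ r := {}
  rw [RelEmbedding.wellFounded_iff_isEmpty]
  constructor
  intro f
  set σ : ℕ → List ℕ := fun n => (f n).1 with hσ
  have hchain : ∀ {n m : ℕ}, n < m → σ n <+: σ m ∧ σ n ≠ σ m := by
    intro n m hnm
    exact f.map_rel_iff.mpr hnm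
  have hlen : ∀ n, n ≤ (σ n).length := by
    intro n
    induction n with
    | zero => exact Nat.zero_le _
    | succ n ih =>
      obtain ⟨hp, hne⟩ := hchain (Nat.lt_succ_self n)
      have hlt : (σ n).length < (σ (n+1)).length :=
        lt_of_le_of_ne hp.length_le (fun he => hne (hp.eq_of_length he))
      omega
  have key : ∀ m i, i < m → (σ m).getD i 0 = (σ (i+1)).getD i 0 := by
    intro m i him
    rcases Nat.lt_or_ge (i+1) m with hlt | hge
    · have hp := (hchain hlt).1
      have hi : i < (σ (i+1)).length := lt_of_lt_of_le (Nat.lt_succ_self i) (hlen (i+1))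
      rw [List.getD_eq_getElem _ _ (lt_of_lt_of_le hi hp.length_le),
          List.getD_eq_getElem _ _ hi]
      exact (hp.getElem hi).symm
    · have hm : m = i + 1 := by omega
      rw [hm]
  set a : ℕ → ℕ := fun i => (σ (i+1)).getD i 0 with ha
  have hpre : ∀ n, (List.ofFn fun i : Fin (n+1) => a i) <+: σ (n+1) := by
    intro n
    rw [List.prefix_iff_eq_take]
    apply List.ext_getElem
    · have := hlen (n+1)
      simp only [List.length_ofFn, List.length_take]
      omega
    · intro i h1 h2
      simp only [List.getElem_ofFn, List.getElem_take]
      have hi : i < n + 1 := by simpa using h1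
      have hilen : i < (σ (n+1)).length := lt_of_lt_of_le hi (hlen (n+1))
      have hk := key (n+1) i hi
      rw [List.getD_eq_getElem _ _ hilen] at hk
      exact hk.symm
  obtain ⟨n, hn⟩ := h a
  obtain ⟨rest, hrest⟩ := hpre n
  have hk : PAS.KEq (s.appList (σ (n+1))) (t.appList (σ (n+1))) := by
    rw [← hrest]
    exact (congrArg₂ PAS.KEq (appList_append s (List.ofFn fun i : Fin (n+1) => a i) rest)
      (appList_append t (List.ofFn fun i : Fin (n+1) => a i) rest)).mpr (keq_appList hn rest)
  exact (f (n+1)).2 hk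

set_option linter.deprecated false in
universe u in
lemma wf_to_sim (s t : K1.Term)
    (hwf : TreeWellFounded (fun σ => ¬ PAS.KEq (s.appList σ) (t.appList σ))) :
    ∃ α : Ordinal.{u}, K1.sim α s t := by
  by_cases h0 : PAS.KEq s t
  · exact ⟨0, sim_zero.mpr h0⟩
  · unfold TreeWellFounded at hwf
    have claim : ∀ p : {l : List ℕ // ¬ PAS.KEq (s.appList l) (t.appList l)},
        K1.sim (Ordinal.lift.{u,0} ((hwf.apply p).rank) + 1) (s.appList p.1) (t.appList p.1) := by
      intro p
      refine hwf.induction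
        (C := fun p => K1.sim (Ordinal.lift.{u,0} ((hwf.apply p).rank) + 1) (s.appList p.1) (t.appList p.1)) p ?_
      intro q ih
      rw [Ordinal.add_one_eq_succ, sim_succ]
      refine fun x : ℕ => ?_
      have e1 : (s.appList q.1).app (.const x) = s.appList (q.1 ++ [x]) :=
        (appList_concat s q.1 x).symm
      have e2 : (t.appList q.1).app (.const x) = t.appList (q.1 ++ [x]) :=
        (appList_concat t q.1 x).symm
      rw [e1, e2]
      by_cases hx : PAS.KEq (s.appList ((q.1 ++ [x] : List ℕ)))
          (t.appList ((q.1 ++ [x] : List ℕ)))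
      · exact sim_mono zero_le (sim_zero.mpr hx)
      · have hne : q.1 ≠ (q.1 ++ [x] : List ℕ) := fun he => by
          have := congrArg List.length he
          simp at this
        have hr : q.1 <+: (q.1 ++ [x] : List ℕ) ∧ q.1 ≠ (q.1 ++ [x] : List ℕ) :=
          ⟨List.prefix_append _ _, hne⟩
        have hs := ih ⟨(q.1 ++ [x] : List ℕ), hx⟩ hr
        have hlt := Ordinal.lift_lt.mpr
          (Acc.rank_lt_of_rel (a := ⟨(q.1 ++ [x] : List ℕ), hx⟩) (hwf.apply q) hr)
        exact sim_mono (by rw [Ordinal.add_one_eq_succ, Order.succ_le_iff]; exact hlt) hs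
    have hc := claim ⟨[], h0⟩
    simp only [PAS.Term.appList, List.foldl_nil] at hc
    exact ⟨Ordinal.lift.{u,0} ((hwf.apply ⟨[], h0⟩).rank) + 1, hc⟩

/-- For closed terms s, t over K₁: s ≈ t iff for every infinite sequence
a₀, a₁, … there is an n with s·a₀·…·aₙ ≃ t·a₀·…·aₙ; equivalently, iff the tree
T = {σ : s·σ ≄ t·σ} is well-founded. -/
theorem stmt9 (s t : K1.Term) :
    ((∃ α : Ordinal, K1.sim α s t) ↔
      ∀ a : ℕ → ℕ, ∃ n : ℕ,
        PAS.KEq (s.appList (List.ofFn fun i : Fin (n + 1) => a i))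
                (t.appList (List.ofFn fun i : Fin (n + 1) => a i))) ∧
    ((∃ α : Ordinal, K1.sim α s t) ↔
      TreeWellFounded (fun σ => ¬ PAS.KEq (s.appList σ) (t.appList σ))) := by
  refine ⟨⟨fun ⟨α, h⟩ => sim_path h, fun hp => wf_to_sim s t (path_to_wf s t hp)⟩,
    ⟨fun ⟨α, h⟩ => path_to_wf s t (sim_path h), wf_to_sim s t⟩⟩
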